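/- arXiv:2405.18253 — 3 statements merged into one kernel-verified Lean document; each statement's English description precedes it below -/
import Mathlib

section
/- Let θ, D, T, Z be random variables on a common probability space taking values in finite sets. Suppose (i) T and the pair (D, Z) are conditionally independent given θ, and (ii) Z and θ are conditionally independent given D. Then T and Z are conditionally independent given D. -/
open Finset
open scoped Classical

/-- Probability of an event under a pmf on a finite sample space. -/
noncomputable def pr {Ω : Type*} [Fintype Ω] (p : Ω → ℝ) (E : Ω → Prop) : ℝ :=
  ∑ ω, if E ω then p ω else 0

/-- Conditional probability `p(E | F)`. -/
noncomputable def cpr {Ω : Type*} [Fintype Ω] (p : Ω → ℝ) (E F : Ω → Prop) : ℝ :=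
  pr p (fun ω => E ω ∧ F ω) / pr p F

/-- `X` and `Y` are conditionally independent given `Z`. -/
def CondIndepRV {Ω A B C : Type*} [Fintype Ω] (p : Ω → ℝ)
    (X : Ω → A) (Y : Ω → B) (Z : Ω → C) : Prop :=
  ∀ x y z, 0 < pr p (fun ω => Z ω = z) →
    cpr p (fun ω => X ω = x ∧ Y ω = y) (fun ω => Z ω = z) =
      cpr p (fun ω => X ω = x) (fun ω => Z ω = z) *
      cpr p (fun ω => Y ω = y) (fun ω => Z ω = z)

lemma pr_congr {Ω : Type*} [Fintype Ω] (p : Ω → ℝ) {E F : Ω → Prop}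
    (h : ∀ ω, E ω ↔ F ω) : pr p E = pr p F := by
  unfold pr
  exact Finset.sum_congr rfl fun ω _ => by rw [h ω]

lemma pr_nonneg {Ω : Type*} [Fintype Ω] {p : Ω → ℝ} (hp : ∀ ω, 0 ≤ p ω)
    (E : Ω → Prop) : 0 ≤ pr p E := by
  unfold pr
  exact Finset.sum_nonneg fun ω _ => by split <;> simp [hp ω]

lemma pr_mono {Ω : Type*} [Fintype Ω] {p : Ω → ℝ} (hp : ∀ ω, 0 ≤ p ω)
    {E F : Ω → Prop} (h : ∀ ω, E ω → F ω) : pr p E ≤ pr p F := by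
  unfold pr
  refine Finset.sum_le_sum fun ω _ => ?_
  by_cases hE : E ω
  · simp [hE, h ω hE]
  · simp only [hE, if_false]
    split <;> simp [hp ω]

lemma pr_eq_zero {Ω : Type*} [Fintype Ω] {p : Ω → ℝ} (hp : ∀ ω, 0 ≤ p ω)
    {E F : Ω → Prop} (h : ∀ ω, E ω → F ω) (hF : pr p F = 0) : pr p E = 0 :=
  le_antisymm (hF ▸ pr_mono hp h) (pr_nonneg hp E)

/-- Decompose probability along the fibers of a map `W`. -/
lemma pr_fiber {Ω C : Type*} [Fintype Ω] [Fintype C] (p : Ω → ℝ)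
    (E : Ω → Prop) (W : Ω → C) :
    pr p E = ∑ c, pr p (fun ω => E ω ∧ W ω = c) := by
  unfold pr
  rw [Finset.sum_comm]
  refine Finset.sum_congr rfl fun ω _ => ?_
  by_cases hE : E ω
  · simp [hE]
  · simp [hE]

/-- Conditional independence implies the unconditional product identity. -/
lemma CI_mul {Ω A B C : Type*} [Fintype Ω] {p : Ω → ℝ} (hp : ∀ ω, 0 ≤ p ω)
    {X : Ω → A} {Y : Ω → B} {W : Ω → C}
    (h : CondIndepRV p X Y W) (x : A) (y : B) (w : C) :
    pr p (fun ω => (X ω = x ∧ Y ω = y) ∧ W ω = w) * pr p (fun ω => W ω = w) =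
      pr p (fun ω => X ω = x ∧ W ω = w) * pr p (fun ω => Y ω = y ∧ W ω = w) := by
  rcases lt_or_eq_of_le (pr_nonneg hp (fun ω => W ω = w)) with hw | hw
  · have := h x y w hw
    unfold cpr at this
    field_simp at this
    exact mul_right_cancel₀ (ne_of_gt hw) (by linear_combination (pr p fun ω => W ω = w) * this)
  · rw [pr_eq_zero hp (fun ω h => h.2) hw.symm,
      pr_eq_zero hp (fun ω (h : X ω = x ∧ W ω = w) => h.2) hw.symm, zero_mul, zero_mul]

theorem stmt3 {Ω Θ D T Z : Type*} [Fintype Ω] [Fintype Θ] [Fintype D] [Fintype T] [Fintype Z]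
    (p : Ω → ℝ) (hp : ∀ ω, 0 ≤ p ω) (hps : ∑ ω, p ω = 1)
    (θv : Ω → Θ) (Dv : Ω → D) (Tv : Ω → T) (Zv : Ω → Z)
    (hCI1 : CondIndepRV p Tv (fun ω => (Dv ω, Zv ω)) θv)
    (hCI2 : CondIndepRV p Zv θv Dv) :
    CondIndepRV p Tv Zv Dv := by
  intro t z d hd
  set PD := pr p (fun ω => Dv ω = d) with hPDdef
  have hPD : PD ≠ 0 := ne_of_gt hd
  -- key joint identity
  have key : pr p (fun ω => (Tv ω = t ∧ Zv ω = z) ∧ Dv ω = d) * PD =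
      pr p (fun ω => Tv ω = t ∧ Dv ω = d) * pr p (fun ω => Zv ω = z ∧ Dv ω = d) := by
    have hdecomp1 : pr p (fun ω => (Tv ω = t ∧ Zv ω = z) ∧ Dv ω = d) =
        ∑ θ0, pr p (fun ω => ((Tv ω = t ∧ Zv ω = z) ∧ Dv ω = d) ∧ θv ω = θ0) :=
      pr_fiber p _ θv
    have hdecomp2 : pr p (fun ω => Tv ω = t ∧ Dv ω = d) =
        ∑ θ0, pr p (fun ω => (Tv ω = t ∧ Dv ω = d) ∧ θv ω = θ0) :=
      pr_fiber p _ θv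
    rw [hdecomp1, hdecomp2, Finset.sum_mul, Finset.sum_mul]
    refine Finset.sum_congr rfl fun θ0 _ => ?_
    -- per-θ0 identity
    set Pθ := pr p (fun ω => θv ω = θ0) with hPθdef
    rcases lt_or_eq_of_le (pr_nonneg hp (fun ω => θv ω = θ0)) with hθ | hθ
    · -- A from hCI1
      have A : ∀ z' : Z,
          pr p (fun ω => (Tv ω = t ∧ (Dv ω = d ∧ Zv ω = z')) ∧ θv ω = θ0) * Pθ =
          pr p (fun ω => Tv ω = t ∧ θv ω = θ0) *
            pr p (fun ω => (Dv ω = d ∧ Zv ω = z') ∧ θv ω = θ0) := by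
        intro z'
        have := CI_mul hp hCI1 t (d, z') θ0
        simpa [Prod.ext_iff] using this
      -- B: marginalize A over z'
      have B : pr p (fun ω => (Tv ω = t ∧ Dv ω = d) ∧ θv ω = θ0) * Pθ =
          pr p (fun ω => Tv ω = t ∧ θv ω = θ0) *
            pr p (fun ω => Dv ω = d ∧ θv ω = θ0) := by
        have e1 : pr p (fun ω => (Tv ω = t ∧ Dv ω = d) ∧ θv ω = θ0) =
            ∑ z', pr p (fun ω => (Tv ω = t ∧ (Dv ω = d ∧ Zv ω = z')) ∧ θv ω = θ0) := by
          rw [pr_fiber p _ Zv]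
          exact Finset.sum_congr rfl fun z' _ => pr_congr p (by tauto)
        have e2 : pr p (fun ω => Dv ω = d ∧ θv ω = θ0) =
            ∑ z', pr p (fun ω => (Dv ω = d ∧ Zv ω = z') ∧ θv ω = θ0) := by
          rw [pr_fiber p _ Zv]
          exact Finset.sum_congr rfl fun z' _ => pr_congr p (by tauto)
        rw [e1, e2, Finset.sum_mul, Finset.mul_sum]
        exact Finset.sum_congr rfl fun z' _ => A z'
      -- C from hCI2
      have C : pr p (fun ω => (Zv ω = z ∧ θv ω = θ0) ∧ Dv ω = d) * PD =
          pr p (fun ω => Zv ω = z ∧ Dv ω = d) *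
            pr p (fun ω => θv ω = θ0 ∧ Dv ω = d) :=
        CI_mul hp hCI2 z θ0 d
      -- rearrange events
      have A' : pr p (fun ω => ((Tv ω = t ∧ Zv ω = z) ∧ Dv ω = d) ∧ θv ω = θ0) * Pθ =
          pr p (fun ω => Tv ω = t ∧ θv ω = θ0) *
            pr p (fun ω => (Zv ω = z ∧ θv ω = θ0) ∧ Dv ω = d) := by
        have := A z
        rw [pr_congr p (E := fun ω => (Tv ω = t ∧ (Dv ω = d ∧ Zv ω = z)) ∧ θv ω = θ0)
            (F := fun ω => ((Tv ω = t ∧ Zv ω = z) ∧ Dv ω = d) ∧ θv ω = θ0) (by tauto),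
          pr_congr p (E := fun ω => (Dv ω = d ∧ Zv ω = z) ∧ θv ω = θ0)
            (F := fun ω => (Zv ω = z ∧ θv ω = θ0) ∧ Dv ω = d) (by tauto)] at this
        exact this
      have Ddθ : pr p (fun ω => θv ω = θ0 ∧ Dv ω = d) =
          pr p (fun ω => Dv ω = d ∧ θv ω = θ0) := pr_congr p (by tauto)
      -- combine: multiply goal by Pθ and chain A', C, B
      have hchain : pr p (fun ω => ((Tv ω = t ∧ Zv ω = z) ∧ Dv ω = d) ∧ θv ω = θ0) * PD * Pθ =
          pr p (fun ω => (Tv ω = t ∧ Dv ω = d) ∧ θv ω = θ0) *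
            pr p (fun ω => Zv ω = z ∧ Dv ω = d) * Pθ := by
        calc pr p (fun ω => ((Tv ω = t ∧ Zv ω = z) ∧ Dv ω = d) ∧ θv ω = θ0) * PD * Pθ
            = (pr p (fun ω => ((Tv ω = t ∧ Zv ω = z) ∧ Dv ω = d) ∧ θv ω = θ0) * Pθ) * PD := by
              ring
          _ = pr p (fun ω => Tv ω = t ∧ θv ω = θ0) *
                (pr p (fun ω => (Zv ω = z ∧ θv ω = θ0) ∧ Dv ω = d) * PD) := by
              rw [A']; ring
          _ = pr p (fun ω => Tv ω = t ∧ θv ω = θ0) *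
                (pr p (fun ω => Zv ω = z ∧ Dv ω = d) *
                  pr p (fun ω => θv ω = θ0 ∧ Dv ω = d)) := by rw [C]
          _ = (pr p (fun ω => Tv ω = t ∧ θv ω = θ0) *
                pr p (fun ω => Dv ω = d ∧ θv ω = θ0)) *
                pr p (fun ω => Zv ω = z ∧ Dv ω = d) := by rw [Ddθ]; ring
          _ = pr p (fun ω => (Tv ω = t ∧ Dv ω = d) ∧ θv ω = θ0) *
                pr p (fun ω => Zv ω = z ∧ Dv ω = d) * Pθ := by rw [← B]; ring
      exact mul_right_cancel₀ (ne_of_gt hθ) hchain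
    · -- Pθ = 0 : both sides vanish
      have h1 : pr p (fun ω => ((Tv ω = t ∧ Zv ω = z) ∧ Dv ω = d) ∧ θv ω = θ0) = 0 :=
        pr_eq_zero hp (fun ω h => h.2) hθ.symm
      have h2 : pr p (fun ω => (Tv ω = t ∧ Dv ω = d) ∧ θv ω = θ0) = 0 :=
        pr_eq_zero hp (fun ω h => h.2) hθ.symm
      rw [h1, h2, zero_mul, zero_mul]
  -- conclude about conditional probabilities
  unfold cpr
  rw [div_mul_div_comm]
  rw [div_eq_div_iff hPD (by positivity)]
  calc pr p (fun ω => (Tv ω = t ∧ Zv ω = z) ∧ Dv ω = d) * (PD * PD)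
      = (pr p (fun ω => (Tv ω = t ∧ Zv ω = z) ∧ Dv ω = d) * PD) * PD := by ring
    _ = pr p (fun ω => Tv ω = t ∧ Dv ω = d) * pr p (fun ω => Zv ω = z ∧ Dv ω = d) * PD := by
        rw [key]
end

section
/- Let W, D, T be random variables on a common probability space taking values in finite sets, with p(W=w)>0 for all w in the range of W, and suppose D and T are conditionally independent given W. Fix d, t with p(D=d)>0, p(T=t)>0, p(D=d,T=t)>0, and suppose p(W=w | D=d) > 0 and p(W=w | T=t) > 0 whenever p(W=w | D=d, T=t) > 0. Write π = p(W=· | D=d, T=t), and define the pointwise parameter information PI(d) = KL(π ‖ p(W=·)) − KL(π ‖ p(W=· | D=d)), PI(t) = KL(π ‖ p(W=·)) − KL(π ‖ p(W=· | T=t)), PI(d∪t) = KL(π ‖ p(W=·)) − KL(π ‖ π), and the conditional pointwise parameter information PI(d|t) = KL(π ‖ p(W=· | T=t)) − KL(π ‖ π), PI(t|d) = KL(π ‖ p(W=· | D=d)) − KL(π ‖ π). Then the pointwise mutual information PMI(d,t) = log( p(D=d,T=t)/(p(D=d)·p(T=t)) ) satisfies PMI(d,t) = PI(d) + PI(t)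 − PI(d∪t) = PI(d) − PI(d|t) = PI(t) − PI(t|d). -/
open Finset
open scoped Classical

/-- KL divergence between two pmfs on a finite set. -/
noncomputable def klD {A : Type*} [Fintype A] (q r : A → ℝ) : ℝ :=
  ∑ w, if 0 < q w then q w * Real.log (q w / r w) else 0

lemma sum_pr_fiber {Ω W : Type*} [Fintype Ω] [Fintype W] (p : Ω → ℝ)
    (Wv : Ω → W) (E : Ω → Prop) :
    ∑ w, pr p (fun ω => Wv ω = w ∧ E ω) = pr p E := by
  unfold pr
  rw [Finset.sum_comm]
  refine Finset.sum_congr rfl fun ω _ => ?_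
  by_cases hE : E ω
  · simp [hE, Finset.sum_ite_eq]
  · simp [hE]

theorem stmt10 {Ω W D T : Type*} [Fintype Ω] [Fintype W] [Fintype D] [Fintype T]
    (p : Ω → ℝ) (hp : ∀ ω, 0 ≤ p ω) (hps : ∑ ω, p ω = 1)
    (Wv : Ω → W) (Dv : Ω → D) (Tv : Ω → T)
    (hW : ∀ w, 0 < pr p (fun ω => Wv ω = w))
    (hCI : CondIndepRV p Dv Tv Wv)
    (d : D) (t : T)
    (hd : 0 < pr p (fun ω => Dv ω = d))
    (ht : 0 < pr p (fun ω => Tv ω = t))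
    (hdt : 0 < pr p (fun ω => Dv ω = d ∧ Tv ω = t))
    (hposd : ∀ w, 0 < cpr p (fun ω => Wv ω = w) (fun ω => Dv ω = d ∧ Tv ω = t) →
      0 < cpr p (fun ω => Wv ω = w) (fun ω => Dv ω = d))
    (hpost : ∀ w, 0 < cpr p (fun ω => Wv ω = w) (fun ω => Dv ω = d ∧ Tv ω = t) →
      0 < cpr p (fun ω => Wv ω = w) (fun ω => Tv ω = t)) :
    -- the posterior of `W` given `D = d, T = t`
    let π : W → ℝ := fun w => cpr p (fun ω => Wv ω = w) (fun ω => Dv ω = d ∧ Tv ω = t)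
    -- pointwise parameter information of `d`, of `t`, and of `d ∪ t`
    let PId : ℝ := klD π (fun w => pr p (fun ω => Wv ω = w)) -
      klD π (fun w => cpr p (fun ω => Wv ω = w) (fun ω => Dv ω = d))
    let PIt : ℝ := klD π (fun w => pr p (fun ω => Wv ω = w)) -
      klD π (fun w => cpr p (fun ω => Wv ω = w) (fun ω => Tv ω = t))
    let PIdt : ℝ := klD π (fun w => pr p (fun ω => Wv ω = w)) - klD π π
    -- conditional pointwise parameter information `PI(d|t)` and `PI(t|d)`
    let PIdgt : ℝ := klD π (fun w => cpr p (fun ω => Wv ω = w) (fun ω => Tv ω = t)) -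
      klD π π
    let PItgd : ℝ := klD π (fun w => cpr p (fun ω => Wv ω = w) (fun ω => Dv ω = d)) -
      klD π π
    -- pointwise mutual information
    let PMI : ℝ := Real.log (pr p (fun ω => Dv ω = d ∧ Tv ω = t) /
      (pr p (fun ω => Dv ω = d) * pr p (fun ω => Tv ω = t)))
    PMI = PId + PIt - PIdt ∧ PMI = PId - PIdgt ∧ PMI = PIt - PItgd := by
  intro π PId PIt PIdt PIdgt PItgd PMI
  set Pd := pr p (fun ω => Dv ω = d) with hPd
  set Pt := pr p (fun ω => Tv ω = t) with hPt
  set Pdt := pr p (fun ω => Dv ω = d ∧ Tv ω = t) with hPdt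
  set pW : W → ℝ := fun w => pr p (fun ω => Wv ω = w) with hpW
  set pWd : W → ℝ := fun w => cpr p (fun ω => Wv ω = w) (fun ω => Dv ω = d) with hpWd
  set pWt : W → ℝ := fun w => cpr p (fun ω => Wv ω = w) (fun ω => Tv ω = t) with hpWt
  have hπnn : ∀ w, 0 ≤ π w := fun w =>
    div_nonneg (pr_nonneg hp _) (le_of_lt hdt)
  -- the posterior sums to 1
  have hone : ∑ w, (if 0 < π w then π w else 0) = 1 := by
    have h1 : ∀ w, (if 0 < π w then π w else 0) = π w := by
      intro w
      by_cases h : 0 < π w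
      · simp [h]
      · simp [h, le_antisymm (not_lt.mp h) (hπnn w)]
    rw [Finset.sum_congr rfl fun w _ => h1 w]
    show ∑ w, pr p (fun ω => Wv ω = w ∧ (Dv ω = d ∧ Tv ω = t)) / Pdt = 1
    rw [← Finset.sum_div, sum_pr_fiber, ← hPdt, div_self (ne_of_gt hdt)]
  -- the Bayes/conditional-independence identity
  have hbayes : ∀ w, pWd w * pWt w * Pd * Pt = π w * pW w * Pdt := by
    intro w
    have hci := hCI d t w (hW w)
    unfold cpr at hci
    have hJ1 : pr p (fun ω => (Dv ω = d ∧ Tv ω = t) ∧ Wv ω = w) =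
        pr p (fun ω => Wv ω = w ∧ (Dv ω = d ∧ Tv ω = t)) :=
      pr_congr p (fun ω => and_comm)
    have hJ2 : pr p (fun ω => Dv ω = d ∧ Wv ω = w) =
        pr p (fun ω => Wv ω = w ∧ Dv ω = d) := pr_congr p (fun ω => and_comm)
    have hJ3 : pr p (fun ω => Tv ω = t ∧ Wv ω = w) =
        pr p (fun ω => Wv ω = w ∧ Tv ω = t) := pr_congr p (fun ω => and_comm)
    rw [hJ1, hJ2, hJ3] at hci
    set A := pr p (fun ω => Wv ω = w ∧ (Dv ω = d ∧ Tv ω = t)) with hA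
    set B := pr p (fun ω => Wv ω = w ∧ Dv ω = d) with hB
    set C := pr p (fun ω => Wv ω = w ∧ Tv ω = t) with hC
    have hPw : (0:ℝ) < pW w := hW w
    have hPw' : (pr p fun ω => Wv ω = w) ≠ 0 := ne_of_gt (hW w)
    rw [div_mul_div_comm, div_eq_div_iff hPw' (by positivity)] at hci
    have hc : (A * pW w) * pW w = (B * C) * pW w := by
      show (A * pr p fun ω => Wv ω = w) * pr p fun ω => Wv ω = w = _
      linear_combination hci
    have hc' : A * pW w = B * C := mul_right_cancel₀ (ne_of_gt hPw) hc
    show B / Pd * (C / Pt) * Pd * Pt = A / Pdt * pW w * Pdt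
    have h1 : B / Pd * (C / Pt) * Pd * Pt = B * C := by
      field_simp
      try ring
    have h2 : A / Pdt * pW w * Pdt = A * pW w := by
      field_simp
      try ring
    rw [h1, h2, hc']
  -- the key computation
  have key : klD π pW - klD π pWd - klD π pWt + klD π π =
      Real.log (Pdt / (Pd * Pt)) := by
    unfold klD
    rw [← Finset.sum_sub_distrib, ← Finset.sum_sub_distrib, ← Finset.sum_add_distrib]
    have hterm : ∀ w ∈ Finset.univ,
        ((if 0 < π w then π w * Real.log (π w / pW w) else 0) -
          (if 0 < π w then π w * Real.log (π w / pWd w) else 0) -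
          (if 0 < π w then π w * Real.log (π w / pWt w) else 0) +
          (if 0 < π w then π w * Real.log (π w / π w) else 0)) =
        (if 0 < π w then π w else 0) * Real.log (Pdt / (Pd * Pt)) := by
      intro w _
      by_cases h : 0 < π w
      · simp only [if_pos h]
        have hpw : 0 < pW w := hW w
        have hpwd : 0 < pWd w := hposd w h
        have hpwt : 0 < pWt w := hpost w h
        rw [div_self (ne_of_gt h), Real.log_one,
          Real.log_div (ne_of_gt h) (ne_of_gt hpw),
          Real.log_div (ne_of_gt h) (ne_of_gt hpwd),
          Real.log_div (ne_of_gt h) (ne_of_gt hpwt),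
          Real.log_div (ne_of_gt hdt) (by positivity),
          Real.log_mul (ne_of_gt hd) (ne_of_gt ht)]
        have hlog : Real.log (pWd w * pWt w * Pd * Pt) =
            Real.log (π w * pW w * Pdt) := by rw [hbayes w]
        rw [Real.log_mul (by positivity) (ne_of_gt ht),
          Real.log_mul (by positivity) (ne_of_gt hd),
          Real.log_mul (ne_of_gt hpwd) (ne_of_gt hpwt),
          Real.log_mul (by positivity) (ne_of_gt hdt),
          Real.log_mul (ne_of_gt h) (ne_of_gt hpw)] at hlog
        ring_nf
        nlinarith [hlog]
      · simp [h]
    rw [Finset.sum_congr rfl hterm, ← Finset.sum_mul, hone, one_mul]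
  refine ⟨?_, ?_, ?_⟩ <;>
    simp only [PMI, PId, PIt, PIdt, PIdgt, PItgd, ← hPd, ← hPt, ← hPdt,
      ← hpW, ← hpWd, ← hpWt] <;> linarith [key]
end

section
/- Let θ, D₁, D₂ be random variables on a common probability space taking values in finite sets Θ, 𝒟₁, 𝒟₂ respectively, and suppose θ and D₂ are conditionally independent given D₁ (i.e., θ → D₁ → D₂ forms a Markov chain). Let ℋ be a nonempty finite set of models and L : ℋ × Θ → ℝ an expected-loss function. Then the minimum expected loss achievable using D₁ is at most that achievable using D₂: min over all functions h₁ : 𝒟₁ → ℋ of E[ L(h₁(D₁), θ) ] ≤ min over all functions h₂ : 𝒟₂ → ℋ of E[ L(h₂(D₂), θ) ], where expectations are over the joint law of (θ, D₁, D₂). -/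
open Finset
open scoped Classical

/-- Blackwell's theorem on decision-making superiority (discrete form): if
`θ → D₁ → D₂` is a Markov chain, the minimum expected loss achievable with
decision rules based on `D₁` is at most that achievable with rules based on `D₂`. -/
theorem stmt11 {Ω Θ D₁ D₂ H : Type*} [Fintype Ω] [Fintype Θ] [Fintype D₁] [Fintype D₂]
    [Fintype H] [Nonempty Θ] [Nonempty D₁] [Nonempty D₂] [Nonempty H]
    (p : Ω → ℝ) (hp : ∀ ω, 0 ≤ p ω) (hps : ∑ ω, p ω = 1)
    (θv : Ω → Θ) (D1v : Ω → D₁) (D2v : Ω → D₂)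
    (hCI : CondIndepRV p θv D2v D1v)
    (L : H → Θ → ℝ) :
    (⨅ h₁ : D₁ → H, ∑ ω, p ω * L (h₁ (D1v ω)) (θv ω)) ≤
      ⨅ h₂ : D₂ → H, ∑ ω, p ω * L (h₂ (D2v ω)) (θv ω) := by
  classical
  have prnn : ∀ E : Ω → Prop, 0 ≤ pr p E := by
    intro E
    refine Finset.sum_nonneg fun ω _ => ?_
    split_ifs with h
    · exact hp ω
    · exact le_refl 0
  set P1 : D₁ → ℝ := fun d₁ => pr p (fun ω => D1v ω = d₁) with hP1def
  set A : Θ → D₁ → ℝ := fun t d₁ => pr p (fun ω => θv ω = t ∧ D1v ω = d₁) with hAdef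
  set B : D₂ → D₁ → ℝ := fun d₂ d₁ => pr p (fun ω => D2v ω = d₂ ∧ D1v ω = d₁) with hBdef
  set J : Θ → D₂ → D₁ → ℝ :=
    fun t d₂ d₁ => pr p (fun ω => (θv ω = t ∧ D2v ω = d₂) ∧ D1v ω = d₁) with hJdef
  have hJ : ∀ t d₂ d₁, 0 < P1 d₁ → J t d₂ d₁ = A t d₁ * B d₂ d₁ / P1 d₁ := by
    intro t d₂ d₁ h
    have hne : P1 d₁ ≠ 0 := ne_of_gt h
    have hci : J t d₂ d₁ / P1 d₁ = A t d₁ / P1 d₁ * (B d₂ d₁ / P1 d₁) := hCI t d₂ d₁ h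
    field_simp at hci
    have h3 : J t d₂ d₁ * P1 d₁ * P1 d₁ = A t d₁ * B d₂ d₁ * P1 d₁ := by linear_combination (P1 d₁) * hci
    have h4 := mul_right_cancel₀ hne h3
    rw [eq_div_iff hne]
    exact h4
  -- f d₁ h : conditional (unnormalized) risk
  set f : D₁ → H → ℝ := fun d₁ h => ∑ t, L h t * A t d₁ with hfdef
  have hmin : ∀ d₁ : D₁, ∃ h : H, ∀ h' : H, f d₁ h ≤ f d₁ h' := fun d₁ => Finite.exists_min (f d₁)
  choose h₁ hh₁ using hmin
  -- f as a sum over the fiber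
  have hfib : ∀ (d₁ : D₁) (h : H),
      (∑ ω ∈ univ.filter (fun ω => D1v ω = d₁), p ω * L h (θv ω)) = f d₁ h := by
    intro d₁ h
    rw [hfdef]
    simp only [hAdef, pr, Finset.mul_sum, mul_ite, mul_zero]
    rw [Finset.sum_comm]
    rw [Finset.sum_filter]
    refine Finset.sum_congr rfl fun ω _ => ?_
    simp [ite_and, eq_comm, mul_comm]
  have hBsum : ∀ d₁ : D₁, (∑ d₂, B d₂ d₁) = P1 d₁ := by
    intro d₁
    simp only [hBdef, hP1def, pr]
    rw [Finset.sum_comm]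
    refine Finset.sum_congr rfl fun ω _ => ?_
    simp [ite_and, eq_comm]
  have hS2 : ∀ (d₁ : D₁) (h₂ : D₂ → H),
      (∑ ω ∈ univ.filter (fun ω => D1v ω = d₁), p ω * L (h₂ (D2v ω)) (θv ω)) =
        ∑ d₂, ∑ t, L (h₂ d₂) t * J t d₂ d₁ := by
    intro d₁ h₂
    simp only [hJdef, pr, Finset.mul_sum, mul_ite, mul_zero]
    conv_rhs => enter [2, d₂]; rw [Finset.sum_comm]
    conv_rhs => rw [Finset.sum_comm]
    rw [Finset.sum_filter]
    refine Finset.sum_congr rfl fun ω _ => ?_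
    simp [ite_and, eq_comm, mul_comm]
  have key : ∀ h₂ : D₂ → H,
      (∑ ω, p ω * L (h₁ (D1v ω)) (θv ω)) ≤ ∑ ω, p ω * L (h₂ (D2v ω)) (θv ω) := by
    intro h₂
    rw [← Finset.sum_fiberwise univ D1v (fun ω => p ω * L (h₁ (D1v ω)) (θv ω)),
        ← Finset.sum_fiberwise univ D1v (fun ω => p ω * L (h₂ (D2v ω)) (θv ω))]
    refine Finset.sum_le_sum fun d₁ _ => ?_
    have hL : (∑ ω ∈ univ.filter (fun ω => D1v ω = d₁), p ω * L (h₁ (D1v ω)) (θv ω)) =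
        f d₁ (h₁ d₁) := by
      rw [← hfib d₁ (h₁ d₁)]
      refine Finset.sum_congr rfl fun ω hω => ?_
      rw [(Finset.mem_filter.mp hω).2]
    rw [hL, hS2 d₁ h₂]
    by_cases hpos : 0 < P1 d₁
    · have hne : P1 d₁ ≠ 0 := ne_of_gt hpos
      have : ∀ d₂ : D₂, (∑ t, L (h₂ d₂) t * J t d₂ d₁) = B d₂ d₁ / P1 d₁ * f d₁ (h₂ d₂) := by
        intro d₂
        rw [hfdef, Finset.mul_sum]
        refine Finset.sum_congr rfl fun t _ => ?_
        rw [hJ t d₂ d₁ hpos]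
        field_simp
      rw [Finset.sum_congr rfl fun d₂ _ => this d₂]
      have hstep : ∀ d₂ : D₂, B d₂ d₁ / P1 d₁ * f d₁ (h₁ d₁) ≤ B d₂ d₁ / P1 d₁ * f d₁ (h₂ d₂) := by
        intro d₂
        refine mul_le_mul_of_nonneg_left (hh₁ d₁ (h₂ d₂)) ?_
        exact div_nonneg (prnn _) (le_of_lt hpos)
      calc f d₁ (h₁ d₁) = (∑ d₂, B d₂ d₁ / P1 d₁) * f d₁ (h₁ d₁) := by
            rw [← Finset.sum_div, hBsum, div_self hne, one_mul]
        _ = ∑ d₂, B d₂ d₁ / P1 d₁ * f d₁ (h₁ d₁) := by rw [Finset.sum_mul]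
        _ ≤ _ := Finset.sum_le_sum fun d₂ _ => hstep d₂
    · -- P1 d₁ = 0
      have h0 : P1 d₁ = 0 := le_antisymm (not_lt.mp hpos) (prnn _)
      have hz : ∀ ω ∈ univ.filter (fun ω => D1v ω = d₁), p ω = 0 := by
        intro ω hω
        have := (Finset.sum_eq_zero_iff_of_nonneg (fun ω _ => by
          dsimp only; split_ifs with h; exacts [hp ω, le_refl 0])).mp h0 ω (Finset.mem_univ ω)
        simpa [(Finset.mem_filter.mp hω).2] using this
      have hf0 : f d₁ (h₁ d₁) = 0 := by
        rw [← hfib]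
        exact Finset.sum_eq_zero fun ω hω => by rw [hz ω hω, zero_mul]
      have hJ0 : ∀ t d₂, J t d₂ d₁ = 0 := by
        intro t d₂
        have hle : J t d₂ d₁ ≤ P1 d₁ := by
          refine Finset.sum_le_sum fun ω _ => ?_
          dsimp only
          split_ifs with h1 h2
          · exact le_refl _
          · exact absurd h1.2 h2
          · exact hp ω
          · exact le_refl 0
        exact le_antisymm (h0 ▸ hle) (prnn _)
      rw [hf0]
      refine Finset.sum_nonneg fun d₂ _ => ?_
      refine Finset.sum_nonneg fun t _ => ?_
      rw [hJ0 t d₂, mul_zero]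
  refine le_ciInf fun h₂ => ?_
  calc (⨅ g : D₁ → H, ∑ ω, p ω * L (g (D1v ω)) (θv ω))
      ≤ ∑ ω, p ω * L (h₁ (D1v ω)) (θv ω) := ciInf_le ((Set.finite_range _).bddBelow) h₁
    _ ≤ _ := key h₂
end
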